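/- Marginal-rate-of-substitution single-crossing equivalences: Let X = [x0,x1] and Y = [y0,y1] be compact real intervals and let v, v̂ : X × Y → ℝ be twice continuously differentiable with v_xz > 0, v̂_xz > 0, v_zz < 0, v̂_zz < 0 everywhere. Say v̂_z ⊵ v_z if for all x ≤ x' in X and z ≤ z' in Y, v_z(x',z') ≥ v_z(x,z) implies v̂_z(x',z') ≥ v̂_z(x,z). Then: (i) if v̂_z ⊵ v_z, then v̂_xz(x,z)/(−v̂_zz(x,z)) ≥ v_xz(x,z)/(−v_zz(x,z)) for all (x,z) ∈ X × Y; (ii) if v̂_xz(x,z)/(−v̂_zz(x',z')) ≥ v_xz(x,z)/(−v_zz(x',z')) for all (x,z) and (x',z') in X × Y, then v̂_z ⊵ v_z; (iii) the hypothesis of (ii) holds if and only if there exists a constant c > 0 such that v̂_xz(x,z) ≥ c·v_xz(x,z) and −v̂_zz(x,z) ≤ −c·v_zz(x,z) for all (x,z) ∈ X × Y. -/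

import Mathlib

open Set

noncomputable section

open MeasureTheory in
private lemma ftc1 {f f' : ℝ → ℝ} {c d a b : ℝ}
    (hd : ∀ t ∈ Set.Icc c d, HasDerivAt f (f' t) t)
    (hc : ContinuousOn f' (Set.Icc c d))
    (ha : a ∈ Set.Icc c d) (hb : b ∈ Set.Icc c d) :
    f b - f a = ∫ u in a..b, f' u := by
  have hsub : Set.uIcc a b ⊆ Set.Icc c d := Set.ordConnected_Icc.uIcc_subset ha hb
  exact (intervalIntegral.integral_eq_sub_of_hasDerivAt (fun t ht => hd t (hsub ht))
    ((hc.mono hsub).intervalIntegrable)).symm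

private lemma sliceY {F : ℝ → ℝ → ℝ} {x0 x1 y0 y1 x : ℝ}
    (hF : ContinuousOn (fun a : ℝ × ℝ => F a.1 a.2) (Set.Icc x0 x1 ×ˢ Set.Icc y0 y1))
    (hx : x ∈ Set.Icc x0 x1) : ContinuousOn (fun u => F x u) (Set.Icc y0 y1) :=
  hF.comp ((continuous_const.prodMk continuous_id).continuousOn) (fun _ hu => ⟨hx, hu⟩)

private lemma sliceX {F : ℝ → ℝ → ℝ} {x0 x1 y0 y1 z : ℝ}
    (hF : ContinuousOn (fun a : ℝ × ℝ => F a.1 a.2) (Set.Icc x0 x1 ×ˢ Set.Icc y0 y1))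
    (hz : z ∈ Set.Icc y0 y1) : ContinuousOn (fun t => F t z) (Set.Icc x0 x1) :=
  hF.comp ((continuous_id.prodMk continuous_const).continuousOn) (fun _ ht => ⟨ht, hz⟩)

open MeasureTheory in
private lemma int_ge_const {f : ℝ → ℝ} {a b m : ℝ} (hab : a ≤ b)
    (hi : IntervalIntegrable f MeasureTheory.volume a b)
    (hm : ∀ t ∈ Set.Icc a b, m ≤ f t) :
    (b - a) * m ≤ ∫ t in a..b, f t := by
  have := intervalIntegral.integral_mono_on hab intervalIntegrable_const hi hm
  simpa using this

open MeasureTheory in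
private lemma int_le_const {f : ℝ → ℝ} {a b m : ℝ} (hab : a ≤ b)
    (hi : IntervalIntegrable f MeasureTheory.volume a b)
    (hm : ∀ t ∈ Set.Icc a b, f t ≤ m) :
    (∫ t in a..b, f t) ≤ (b - a) * m := by
  have := intervalIntegral.integral_mono_on hab hi intervalIntegrable_const hm
  simpa using this


open MeasureTheory in
set_option maxHeartbeats 1000000 in
/-- **Marginal-rate-of-substitution single-crossing equivalences** (Remark 3). -/
theorem mrs_single_crossing_equivalences
    (x0 x1 y0 y1 : ℝ) (hx : x0 < x1) (hy : y0 < y1)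
    -- `v` twice continuously differentiable, with derivative data
    (v vz vxz vzz : ℝ → ℝ → ℝ)
    (hvz : ∀ x ∈ Set.Icc x0 x1, ∀ z ∈ Set.Icc y0 y1,
      HasDerivAt (fun t => v x t) (vz x z) z)
    (hvxz : ∀ x ∈ Set.Icc x0 x1, ∀ z ∈ Set.Icc y0 y1,
      HasDerivAt (fun t => vz t z) (vxz x z) x)
    (hvzz : ∀ x ∈ Set.Icc x0 x1, ∀ z ∈ Set.Icc y0 y1,
      HasDerivAt (fun t => vz x t) (vzz x z) z)
    (hvxzcont : ContinuousOn (fun a : ℝ × ℝ => vxz a.1 a.2) (Set.Icc x0 x1 ×ˢ Set.Icc y0 y1))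
    (hvzzcont : ContinuousOn (fun a : ℝ × ℝ => vzz a.1 a.2) (Set.Icc x0 x1 ×ˢ Set.Icc y0 y1))
    (hvxzpos : ∀ x ∈ Set.Icc x0 x1, ∀ z ∈ Set.Icc y0 y1, 0 < vxz x z)
    (hvzzneg : ∀ x ∈ Set.Icc x0 x1, ∀ z ∈ Set.Icc y0 y1, vzz x z < 0)
    -- `v̂` twice continuously differentiable, with derivative data
    (vh vhz vhxz vhzz : ℝ → ℝ → ℝ)
    (hvhz : ∀ x ∈ Set.Icc x0 x1, ∀ z ∈ Set.Icc y0 y1,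
      HasDerivAt (fun t => vh x t) (vhz x z) z)
    (hvhxz : ∀ x ∈ Set.Icc x0 x1, ∀ z ∈ Set.Icc y0 y1,
      HasDerivAt (fun t => vhz t z) (vhxz x z) x)
    (hvhzz : ∀ x ∈ Set.Icc x0 x1, ∀ z ∈ Set.Icc y0 y1,
      HasDerivAt (fun t => vhz x t) (vhzz x z) z)
    (hvhxzcont : ContinuousOn (fun a : ℝ × ℝ => vhxz a.1 a.2) (Set.Icc x0 x1 ×ˢ Set.Icc y0 y1))
    (hvhzzcont : ContinuousOn (fun a : ℝ × ℝ => vhzz a.1 a.2) (Set.Icc x0 x1 ×ˢ Set.Icc y0 y1))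
    (hvhxzpos : ∀ x ∈ Set.Icc x0 x1, ∀ z ∈ Set.Icc y0 y1, 0 < vhxz x z)
    (hvhzzneg : ∀ x ∈ Set.Icc x0 x1, ∀ z ∈ Set.Icc y0 y1, vhzz x z < 0) :
    -- (i) the single-crossing condition implies the pointwise ratio comparison
    ((∀ x ∈ Set.Icc x0 x1, ∀ x' ∈ Set.Icc x0 x1, x ≤ x' →
        ∀ z ∈ Set.Icc y0 y1, ∀ z' ∈ Set.Icc y0 y1, z ≤ z' →
          vz x z ≤ vz x' z' → vhz x z ≤ vhz x' z') →
      ∀ x ∈ Set.Icc x0 x1, ∀ z ∈ Set.Icc y0 y1,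
        vxz x z / (-vzz x z) ≤ vhxz x z / (-vhzz x z)) ∧
    -- (ii) the two-point ratio comparison implies the single-crossing condition
    ((∀ x ∈ Set.Icc x0 x1, ∀ z ∈ Set.Icc y0 y1, ∀ x' ∈ Set.Icc x0 x1, ∀ z' ∈ Set.Icc y0 y1,
        vxz x z / (-vzz x' z') ≤ vhxz x z / (-vhzz x' z')) →
      (∀ x ∈ Set.Icc x0 x1, ∀ x' ∈ Set.Icc x0 x1, x ≤ x' →
        ∀ z ∈ Set.Icc y0 y1, ∀ z' ∈ Set.Icc y0 y1, z ≤ z' →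
          vz x z ≤ vz x' z' → vhz x z ≤ vhz x' z')) ∧
    -- (iii) the two-point ratio comparison is equivalent to a uniform constant `c > 0`
    ((∀ x ∈ Set.Icc x0 x1, ∀ z ∈ Set.Icc y0 y1, ∀ x' ∈ Set.Icc x0 x1, ∀ z' ∈ Set.Icc y0 y1,
        vxz x z / (-vzz x' z') ≤ vhxz x z / (-vhzz x' z')) ↔
      ∃ c : ℝ, 0 < c ∧ ∀ x ∈ Set.Icc x0 x1, ∀ z ∈ Set.Icc y0 y1,
        c * vxz x z ≤ vhxz x z ∧ -vhzz x z ≤ -(c * vzz x z)) := by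
  refine ⟨?_, ?_, ?_⟩
  · intro hsc
    by_contra hcon
    push_neg at hcon
    obtain ⟨x, hxm, z, hzm, hlt⟩ := hcon
    set rect := Set.Icc x0 x1 ×ˢ Set.Icc y0 y1 with hrect
    set F := fun a : ℝ × ℝ => vxz a.1 a.2 / (-vzz a.1 a.2) - vhxz a.1 a.2 / (-vhzz a.1 a.2)
      with hFdef
    have hFcont : ContinuousOn F rect := by
      apply ContinuousOn.sub
      · exact hvxzcont.div hvzzcont.neg
          (fun a ha => by have := hvzzneg a.1 ha.1 a.2 ha.2; intro h; linarith [neg_eq_zero.mp h])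
      · exact hvhxzcont.div hvhzzcont.neg
          (fun a ha => by have := hvhzzneg a.1 ha.1 a.2 ha.2; intro h; linarith [neg_eq_zero.mp h])
    have hio : Set.Ioo x0 x1 ×ˢ Set.Ioo y0 y1 ⊆ rect :=
      Set.prod_mono Set.Ioo_subset_Icc_self Set.Ioo_subset_Icc_self
    -- find an interior point with F > 0
    have hpcl : ((x, z) : ℝ × ℝ) ∈ closure (Set.Ioo x0 x1 ×ˢ Set.Ioo y0 y1) := by
      rw [closure_prod_eq, closure_Ioo hx.ne, closure_Ioo hy.ne]
      exact Set.mk_mem_prod hxm hzm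
    have hneb : (nhdsWithin ((x,z) : ℝ × ℝ) (Set.Ioo x0 x1 ×ˢ Set.Ioo y0 y1)).NeBot :=
      mem_closure_iff_nhdsWithin_neBot.mp hpcl
    have hev : ∀ᶠ q in nhdsWithin ((x,z) : ℝ × ℝ) rect, 0 < F q := by
      have hFc : ContinuousWithinAt F rect (x, z) := hFcont _ (Set.mk_mem_prod hxm hzm)
      have hFp : 0 < F (x, z) := sub_pos.mpr hlt
      exact hFc.eventually (eventually_gt_nhds hFp)
    have hev' : ∀ᶠ q in nhdsWithin ((x,z) : ℝ × ℝ) (Set.Ioo x0 x1 ×ˢ Set.Ioo y0 y1), 0 < F q :=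
      hev.filter_mono (nhdsWithin_mono _ hio)
    obtain ⟨⟨a, b⟩, hFab, habm⟩ := (hev'.and eventually_mem_nhdsWithin).exists
    obtain ⟨ha, hb⟩ := habm
    have hXa : a ∈ Set.Icc x0 x1 := ⟨ha.1.le, ha.2.le⟩
    have hYb : b ∈ Set.Icc y0 y1 := ⟨hb.1.le, hb.2.le⟩
    set P := vxz a b with hPdef
    set Q := -vzz a b with hQdef
    set Ph := vhxz a b with hPhdef
    set Qh := -vhzz a b with hQhdef
    have hP : 0 < P := hvxzpos a hXa b hYb
    have hQ : 0 < Q := by have := hvzzneg a hXa b hYb; simp only [hQdef]; linarith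
    have hPh : 0 < Ph := hvhxzpos a hXa b hYb
    have hQh : 0 < Qh := by have := hvhzzneg a hXa b hYb; simp only [hQhdef]; linarith
    have hratio : Ph / Qh < P / Q := by
      have h0 := hFab
      rw [hFdef] at h0
      simp only at h0
      rw [← hPdef, ← hQdef, ← hPhdef, ← hQhdef] at h0
      linarith
    set s := (P / Q + Ph / Qh) / 2 with hsdef
    have hs0 : 0 < s := by
      have := div_pos hP hQ; have := div_pos hPh hQh; simp only [hsdef]; linarith
    have hsl : Ph / Qh < s := by simp only [hsdef]; linarith
    have hsu : s < P / Q := by simp only [hsdef]; linarith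
    set m1 := P - s * Q with hm1def
    set m2 := s * Qh - Ph with hm2def
    have hm1 : 0 < m1 := by
      have := (lt_div_iff₀ hQ).mp hsu; simp only [hm1def]; linarith
    have hm2 : 0 < m2 := by simp only [hm2def]; nlinarith [(div_lt_iff₀ hQh).mp hsl]
    set ε := min m1 m2 / (2 * (1 + s)) with hεdef
    have h1s : (0:ℝ) < 1 + s := by linarith
    have hε : 0 < ε := by
      apply div_pos (lt_min hm1 hm2); linarith
    have hεs1 : ε * (1 + s) ≤ m1 / 2 := by
      have he : ε * (1 + s) = min m1 m2 / 2 := by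
        simp only [hεdef]; field_simp
      rw [he]; have := min_le_left m1 m2; linarith
    have hεs2 : ε * (1 + s) ≤ m2 / 2 := by
      have he : ε * (1 + s) = min m1 m2 / 2 := by
        simp only [hεdef]; field_simp
      rw [he]; have := min_le_right m1 m2; linarith
    -- continuity at (a,b)
    have hrectnh : rect ∈ nhds ((a, b) : ℝ × ℝ) :=
      Filter.mem_of_superset ((isOpen_Ioo.prod isOpen_Ioo).mem_nhds ⟨ha, hb⟩) hio
    have e1 : ∀ᶠ q in nhds ((a,b) : ℝ × ℝ), |vxz q.1 q.2 - P| < ε :=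
      (hvxzcont.continuousAt hrectnh).eventually (eventually_abs_sub_lt _ hε)
    have e2 : ∀ᶠ q in nhds ((a,b) : ℝ × ℝ), |vzz q.1 q.2 - vzz a b| < ε :=
      (hvzzcont.continuousAt hrectnh).eventually (eventually_abs_sub_lt _ hε)
    have e3 : ∀ᶠ q in nhds ((a,b) : ℝ × ℝ), |vhxz q.1 q.2 - Ph| < ε :=
      (hvhxzcont.continuousAt hrectnh).eventually (eventually_abs_sub_lt _ hε)
    have e4 : ∀ᶠ q in nhds ((a,b) : ℝ × ℝ), |vhzz q.1 q.2 - vhzz a b| < ε :=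
      (hvhzzcont.continuousAt hrectnh).eventually (eventually_abs_sub_lt _ hε)
    obtain ⟨ρ, hρ, hball⟩ := Metric.eventually_nhds_iff_ball.mp ((e1.and e2).and (e3.and e4))
    -- choose the step size
    set h := min (min (x1 - a) ((y1 - b) / s)) (ρ / (2 * (1 + s))) with hhdef
    have hh : 0 < h := by
      apply lt_min (lt_min (by linarith [ha.2]) (div_pos (by linarith [hb.2]) hs0))
      exact div_pos hρ (by linarith)
    have hhx : h ≤ x1 - a := le_trans (min_le_left _ _) (min_le_left _ _)
    have hhy : h ≤ (y1 - b) / s := le_trans (min_le_left _ _) (min_le_right _ _)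
    have hhρ : h * (2 * (1 + s)) ≤ ρ := by
      have := min_le_right (min (x1 - a) ((y1 - b) / s)) (ρ / (2 * (1 + s)))
      rw [← hhdef] at this
      exact (le_div_iff₀ (by linarith)).mp this
    have hsh : 0 ≤ s * h := (mul_pos hs0 hh).le
    have hX2 : a + h ∈ Set.Icc x0 x1 := ⟨by linarith [ha.1], by linarith⟩
    have hY2 : b + s * h ∈ Set.Icc y0 y1 := by
      constructor
      · linarith [hb.1]
      · have : h * s ≤ y1 - b := (le_div_iff₀ hs0).mp hhy
        nlinarith
    -- points in the small rectangle lie in the ball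
    have hinball : ∀ t ∈ Set.Icc a (a + h), ∀ u ∈ Set.Icc b (b + s * h),
        ((t, u) : ℝ × ℝ) ∈ Metric.ball ((a, b) : ℝ × ℝ) ρ := by
      intro t ht u hu
      rw [Metric.mem_ball, Prod.dist_eq]
      apply max_lt
      · rw [Real.dist_eq, abs_of_nonneg (by linarith [ht.1])]
        nlinarith [ht.2, hhρ, mul_pos hs0 hh]
      · rw [Real.dist_eq, abs_of_nonneg (by linarith [hu.1])]
        nlinarith [hu.2, hhρ, mul_pos hs0 hh]
    have hbnd : ∀ t ∈ Set.Icc a (a + h), ∀ u ∈ Set.Icc b (b + s * h),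
        |vxz t u - P| < ε ∧ |vzz t u - vzz a b| < ε ∧ |vhxz t u - Ph| < ε ∧
          |vhzz t u - vhzz a b| < ε := by
      intro t ht u hu
      obtain ⟨⟨h1, h2⟩, h3, h4⟩ := hball _ (hinball t ht u hu)
      exact ⟨h1, h2, h3, h4⟩
    have hbm : b ∈ Set.Icc b (b + s * h) := ⟨le_refl _, by linarith⟩
    have ham : a + h ∈ Set.Icc a (a + h) := ⟨by linarith, le_refl _⟩
    have hXu : Set.uIcc a (a + h) ⊆ Set.Icc x0 x1 := Set.ordConnected_Icc.uIcc_subset hXa hX2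
    have hYu : Set.uIcc b (b + s * h) ⊆ Set.Icc y0 y1 := Set.ordConnected_Icc.uIcc_subset hYb hY2
    -- FTC decompositions
    have dv1 : vz (a + h) b - vz a b = ∫ t in a..(a + h), vxz t b :=
      ftc1 (fun t ht => hvxz t ht b hYb) (sliceX hvxzcont hYb) hXa hX2
    have dv2 : vz (a + h) (b + s * h) - vz (a + h) b = ∫ u in b..(b + s * h), vzz (a + h) u :=
      ftc1 (fun u hu => hvzz (a + h) hX2 u hu) (sliceY hvzzcont hX2) hYb hY2
    have dvh1 : vhz (a + h) b - vhz a b = ∫ t in a..(a + h), vhxz t b :=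
      ftc1 (fun t ht => hvhxz t ht b hYb) (sliceX hvhxzcont hYb) hXa hX2
    have dvh2 : vhz (a + h) (b + s * h) - vhz (a + h) b = ∫ u in b..(b + s * h), vhzz (a + h) u :=
      ftc1 (fun u hu => hvhzz (a + h) hX2 u hu) (sliceY hvhzzcont hX2) hYb hY2
    -- integral bounds
    have iA : IntervalIntegrable (fun t => vxz t b) volume a (a + h) :=
      ((sliceX hvxzcont hYb).mono hXu).intervalIntegrable
    have iAh : IntervalIntegrable (fun t => vhxz t b) volume a (a + h) :=
      ((sliceX hvhxzcont hYb).mono hXu).intervalIntegrable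
    have iB : IntervalIntegrable (fun u => vzz (a + h) u) volume b (b + s * h) :=
      ((sliceY hvzzcont hX2).mono hYu).intervalIntegrable
    have iBh : IntervalIntegrable (fun u => vhzz (a + h) u) volume b (b + s * h) :=
      ((sliceY hvhzzcont hX2).mono hYu).intervalIntegrable
    have bA : (a + h - a) * (P - ε) ≤ ∫ t in a..(a + h), vxz t b :=
      int_ge_const (by linarith) iA (fun t ht => by
        have := (hbnd t ht b hbm).1; have := abs_lt.mp this; linarith [this.1])
    have bB : (b + s * h - b) * (vzz a b - ε) ≤ ∫ u in b..(b + s * h), vzz (a + h) u :=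
      int_ge_const (by linarith) iB (fun u hu => by
        have := (hbnd (a + h) ham u hu).2.1; have := abs_lt.mp this; linarith [this.1])
    have bAh : (∫ t in a..(a + h), vhxz t b) ≤ (a + h - a) * (Ph + ε) :=
      int_le_const (by linarith) iAh (fun t ht => by
        have := (hbnd t ht b hbm).2.2.1; have := abs_lt.mp this; linarith [this.2])
    have bBh : (∫ u in b..(b + s * h), vhzz (a + h) u) ≤ (b + s * h - b) * (vhzz a b + ε) :=
      int_le_const (by linarith) iBh (fun u hu => by
        have := (hbnd (a + h) ham u hu).2.2.2; have := abs_lt.mp this; linarith [this.2])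
    have hQeq : vzz a b = -Q := by simp only [hQdef]; ring
    have hQheq : vhzz a b = -Qh := by simp only [hQhdef]; ring
    -- the increment of vz is positive
    have hΔv : vz a b ≤ vz (a + h) (b + s * h) := by
      have lb : h * (P - ε) + (s * h) * (-Q - ε) ≤
          vz (a + h) (b + s * h) - vz a b := by
        have e1' : (a + h - a) = h := by ring
        have e2' : (b + s * h - b) = s * h := by ring
        rw [e1'] at bA; rw [e2', hQeq] at bB
        linarith
      have lb2 : h * (m1 / 2) ≤ h * (P - ε) + (s * h) * (-Q - ε) := by
        have : h * (P - ε) + (s * h) * (-Q - ε) = h * (m1 - ε * (1 + s)) := by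
          simp only [hm1def]; ring
        rw [this]
        exact mul_le_mul_of_nonneg_left (by linarith) hh.le
      nlinarith [mul_pos hh hm1]
    -- the increment of vhz is negative
    have hΔvh : vhz (a + h) (b + s * h) < vhz a b := by
      have ub : vhz (a + h) (b + s * h) - vhz a b ≤
          h * (Ph + ε) + (s * h) * (-Qh + ε) := by
        have e1' : (a + h - a) = h := by ring
        have e2' : (b + s * h - b) = s * h := by ring
        rw [e1'] at bAh; rw [e2', hQheq] at bBh
        linarith
      have ub2 : h * (Ph + ε) + (s * h) * (-Qh + ε) ≤ h * (-(m2 / 2)) := by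
        have : h * (Ph + ε) + (s * h) * (-Qh + ε) = h * (-m2 + ε * (1 + s)) := by
          simp only [hm2def]; ring
        rw [this]
        exact mul_le_mul_of_nonneg_left (by linarith) hh.le
      nlinarith [mul_pos hh hm2]
    have := hsc a hXa (a + h) hX2 (by linarith) b hYb (b + s * h) hY2 (by linarith) hΔv
    linarith
  · intro hyp x hxm x' hx'm hxx z hzm z' hz'm hzz hvv
    -- cross-multiplied form of the hypothesis
    have cross : ∀ p ∈ Set.Icc x0 x1, ∀ pz ∈ Set.Icc y0 y1, ∀ q ∈ Set.Icc x0 x1,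
        ∀ qz ∈ Set.Icc y0 y1,
        vxz p pz * (-vhzz q qz) ≤ vhxz p pz * (-vzz q qz) := by
      intro p hp pz hpz q hq qz hqz
      have h1 : (0:ℝ) < -vzz q qz := by linarith [hvzzneg q hq qz hqz]
      have h2 : (0:ℝ) < -vhzz q qz := by linarith [hvhzzneg q hq qz hqz]
      exact (div_le_div_iff₀ h1 h2).mp (hyp p hp pz hpz q hq qz hqz)
    have hXsub : Set.Icc x x' ⊆ Set.Icc x0 x1 := Set.Icc_subset_Icc hxm.1 hx'm.2
    have hYsub : Set.Icc z z' ⊆ Set.Icc y0 y1 := Set.Icc_subset_Icc hzm.1 hz'm.2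
    have hXu : Set.uIcc x x' ⊆ Set.Icc x0 x1 := Set.ordConnected_Icc.uIcc_subset hxm hx'm
    have hYu : Set.uIcc z z' ⊆ Set.Icc y0 y1 := Set.ordConnected_Icc.uIcc_subset hzm hz'm
    -- integrability
    have iA : IntervalIntegrable (fun t => vxz t z) volume x x' :=
      ((sliceX hvxzcont hzm).mono hXu).intervalIntegrable
    have iAh : IntervalIntegrable (fun t => vhxz t z) volume x x' :=
      ((sliceX hvhxzcont hzm).mono hXu).intervalIntegrable
    have iB : IntervalIntegrable (fun u => -vzz x' u) volume z z' :=
      (((sliceY hvzzcont hx'm).mono hYu).neg).intervalIntegrable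
    have iBh : IntervalIntegrable (fun u => -vhzz x' u) volume z z' :=
      (((sliceY hvhzzcont hx'm).mono hYu).neg).intervalIntegrable
    set A := ∫ t in x..x', vxz t z with hAdef
    set Ah := ∫ t in x..x', vhxz t z with hAhdef
    set B := ∫ u in z..z', -vzz x' u with hBdef
    set Bh := ∫ u in z..z', -vhzz x' u with hBhdef
    -- FTC decompositions
    have dv1 : vz x' z - vz x z = A := ftc1 (fun t ht => hvxz t ht z hzm) (sliceX hvxzcont hzm) hxm hx'm
    have dv2 : vz x' z' - vz x' z = -B := by
      have := ftc1 (fun u hu => hvzz x' hx'm u hu) (sliceY hvzzcont hx'm) hzm hz'm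
      rw [this, hBdef, intervalIntegral.integral_neg]; ring
    have dvh1 : vhz x' z - vhz x z = Ah :=
      ftc1 (fun t ht => hvhxz t ht z hzm) (sliceX hvhxzcont hzm) hxm hx'm
    have dvh2 : vhz x' z' - vhz x' z = -Bh := by
      have := ftc1 (fun u hu => hvhzz x' hx'm u hu) (sliceY hvhzzcont hx'm) hzm hz'm
      rw [this, hBhdef, intervalIntegral.integral_neg]; ring
    have hBA : B ≤ A := by linarith
    -- goal reduces to Bh ≤ Ah
    have key : Bh ≤ Ah := by
      have hAh0 : 0 ≤ Ah := intervalIntegral.integral_nonneg hxx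
        (fun t ht => (hvhxzpos t (hXsub ht) z hzm).le)
      rcases eq_or_lt_of_le hzz with h | h
      · have : Bh = 0 := by rw [hBhdef, ← h, intervalIntegral.integral_same]
        linarith
      · have hBpos : 0 < B := intervalIntegral.intervalIntegral_pos_of_pos_on iB
          (fun u hu => by linarith [hvzzneg x' hx'm u (hYsub (Set.Ioo_subset_Icc_self hu))]) h
        have hBhpos : 0 < Bh := intervalIntegral.intervalIntegral_pos_of_pos_on iBh
          (fun u hu => by linarith [hvhzzneg x' hx'm u (hYsub (Set.Ioo_subset_Icc_self hu))]) h
        -- step 1 : pointwise in t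
        have step1 : ∀ t ∈ Set.Icc x x', vxz t z * Bh ≤ vhxz t z * B := by
          intro t ht
          have e1 : vxz t z * Bh = ∫ u in z..z', vxz t z * (-vhzz x' u) :=
            (intervalIntegral.integral_const_mul _ _).symm
          have e2 : vhxz t z * B = ∫ u in z..z', vhxz t z * (-vzz x' u) :=
            (intervalIntegral.integral_const_mul _ _).symm
          rw [e1, e2]
          exact intervalIntegral.integral_mono_on hzz (iBh.const_mul _) (iB.const_mul _)
            (fun u hu => cross t (hXsub ht) z hzm x' hx'm u (hYsub hu))
        have step2 : A * Bh ≤ Ah * B := by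
          have e1 : A * Bh = ∫ t in x..x', vxz t z * Bh :=
            (intervalIntegral.integral_mul_const _ _).symm
          have e2 : Ah * B = ∫ t in x..x', vhxz t z * B :=
            (intervalIntegral.integral_mul_const _ _).symm
          rw [e1, e2]
          exact intervalIntegral.integral_mono_on hxx (iA.mul_const _) (iAh.mul_const _) step1
        nlinarith
    linarith
  · constructor
    · intro hyp
      have hcomp : IsCompact (Set.Icc x0 x1 ×ˢ Set.Icc y0 y1) := isCompact_Icc.prod isCompact_Icc
      have hne : (Set.Icc x0 x1 ×ˢ Set.Icc y0 y1).Nonempty :=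
        ⟨(x0, y0), ⟨⟨le_refl _, hx.le⟩, ⟨le_refl _, hy.le⟩⟩⟩
      have hgc : ContinuousOn (fun a : ℝ × ℝ => (-vhzz a.1 a.2) / (-vzz a.1 a.2))
          (Set.Icc x0 x1 ×ˢ Set.Icc y0 y1) :=
        (hvhzzcont.neg).div (hvzzcont.neg)
          (fun a ha => by have := hvzzneg a.1 ha.1 a.2 ha.2; intro h; linarith [neg_eq_zero.mp h])
      obtain ⟨q, hq, hmax⟩ := hcomp.exists_isMaxOn hne hgc
      have hDq : (0:ℝ) < -vzz q.1 q.2 := by linarith [hvzzneg q.1 hq.1 q.2 hq.2]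
      have hNq : (0:ℝ) < -vhzz q.1 q.2 := by linarith [hvhzzneg q.1 hq.1 q.2 hq.2]
      set c := (-vhzz q.1 q.2) / (-vzz q.1 q.2) with hcdef
      refine ⟨c, div_pos hNq hDq, fun x hxm z hzm => ⟨?_, ?_⟩⟩
      · have h1 : vxz x z * (-vhzz q.1 q.2) ≤ vhxz x z * (-vzz q.1 q.2) := by
          have := hyp x hxm z hzm q.1 hq.1 q.2 hq.2
          exact (div_le_div_iff₀ hDq hNq).mp this
        rw [hcdef, div_mul_eq_mul_div, div_le_iff₀ hDq]
        nlinarith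
      · have hg := hmax (Set.mk_mem_prod hxm hzm)
        have hD : (0:ℝ) < -vzz x z := by linarith [hvzzneg x hxm z hzm]
        have : -vhzz x z ≤ c * (-vzz x z) := (div_le_iff₀ hD).mp hg
        linarith [this, (mul_neg c (vzz x z)).symm]
    · rintro ⟨c, hc, hcond⟩ x hxm z hzm x' hx'm z' hz'm
      obtain ⟨h1, h2⟩ := hcond x hxm z hzm
      obtain ⟨h1', h2'⟩ := hcond x' hx'm z' hz'm
      have hD : (0:ℝ) < -vhzz x' z' := by linarith [hvhzzneg x' hx'm z' hz'm]
      have heq : vxz x z / (-vzz x' z') = (c * vxz x z) / (c * (-vzz x' z')) :=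
        (mul_div_mul_left _ _ hc.ne').symm
      rw [heq]
      refine div_le_div₀ (hvhxzpos x hxm z hzm).le h1 hD ?_
      rw [mul_neg]; exact h2'


  end
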